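/- For every bounded-degree tree T (finite or infinite) with maximum degree Δ: if the pruned tree f(T), obtained by deleting all end-path vertices except branch vertices, has finite locating chromatic number m, then T has a locating (m+Δ)-coloring; hence χ_L(T) ≤ χ_L(f(T)) + Δ. -/

import Mathlib

open Set

/-- The distance from a vertex `v` to the color class of color `i`. -/
noncomputable def distClass {V : Type*} (G : SimpleGraph V) {t : ℕ}
    (c : V → Fin t) (v : V) (i : Fin t) : ℕ :=
  sInf {m : ℕ | ∃ x, c x = i ∧ G.dist v x = m}

/-- A locating coloring: a proper coloring in which all vertices have
pairwise distinct color codes. -/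
noncomputable def IsLocatingColoring {V : Type*} (G : SimpleGraph V) {t : ℕ}
    (c : V → Fin t) : Prop :=
  (∀ u v, G.Adj u v → c u ≠ c v) ∧ Function.Injective (fun v => distClass G c v)

/-- A branch vertex: a vertex of degree at least 3. -/
def IsBranch {V : Type*} (G : SimpleGraph V) (v : V) : Prop :=
  3 ≤ (G.neighborSet v).ncard

/-- The vertices kept by the pruning operation `f`: branch vertices, vertices lying
on a path between two branch vertices, and everything if there is no branch vertex
(so all end-path vertices except branch vertices are removed). -/
def pruneKeep {V : Type*} (G : SimpleGraph V) : Set V :=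
  {v | IsBranch G v ∨
    (∃ (b₁ b₂ : V) (p : G.Walk b₁ b₂), IsBranch G b₁ ∧ IsBranch G b₂ ∧
      p.IsPath ∧ v ∈ p.support) ∨
    (∀ b, ¬ IsBranch G b)}

/-- The pruned tree `f(T)`: the subgraph induced on the kept vertices. -/
def prune {V : Type*} (G : SimpleGraph V) : SimpleGraph (pruneKeep G) :=
  G.induce (pruneKeep G)

namespace LocAux
open SimpleGraph Walk

variable {V : Type*} {G : SimpleGraph V}

section DistClass
variable {t : ℕ} {c : V → Fin t} {i : Fin t}

lemma distClass_le {x : V} (v : V) (h : c x = i) : distClass G c v i ≤ G.dist v x :=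
  Nat.sInf_le ⟨x, h, rfl⟩

lemma distClass_exists (v : V) (h : ∃ x, c x = i) :
    ∃ x, c x = i ∧ G.dist v x = distClass G c v i := by
  obtain ⟨x, hx⟩ := h
  exact Nat.sInf_mem (⟨G.dist v x, x, hx, rfl⟩ :
    {m : ℕ | ∃ x, c x = i ∧ G.dist v x = m}.Nonempty)

lemma distClass_empty (v : V) (h : ∀ x, c x ≠ i) : distClass G c v i = 0 := by
  have : {m : ℕ | ∃ x, c x = i ∧ G.dist v x = m} = ∅ := by
    ext k; simp only [Set.mem_setOf_eq, Set.mem_empty_iff_false, iff_false, not_exists]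
    exact fun x hx => absurd hx.1 (h x)
  rw [distClass, this, Nat.sInf_empty]

lemma distClass_self (v : V) (h : c v = i) : distClass G c v i = 0 :=
  Nat.le_zero.mp (by simpa [SimpleGraph.dist_self] using distClass_le (G := G) v h)

lemma distClass_ne_zero {v : V} (hr : ∀ x, c x = i → G.Reachable v x)
    (hne : ∃ x, c x = i) (hv : c v ≠ i) : distClass G c v i ≠ 0 := by
  intro h0
  obtain ⟨x, hx, hd⟩ := distClass_exists (G := G) v hne
  rw [h0] at hd
  rw [(hr x hx).dist_eq_zero_iff.mp hd] at hv
  exact hv hx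

lemma distClass_pos {v : V} (hr : ∀ x, c x = i → G.Reachable v x)
    (hne : ∃ x, c x = i) (hv : c v ≠ i) : 1 ≤ distClass G c v i :=
  Nat.one_le_iff_ne_zero.mpr (distClass_ne_zero hr hne hv)

lemma distClass_eq_one {v : V} (hr : ∀ x, c x = i → G.Reachable v x)
    (hne : ∃ x, c x = i ∧ G.dist v x = 1) (hv : c v ≠ i) : distClass G c v i = 1 := by
  obtain ⟨x, hx, hd⟩ := hne
  exact le_antisymm (hd ▸ distClass_le v hx)
    (distClass_pos hr ⟨x, hx⟩ hv)

lemma distClass_shift {v b : V} {k : ℕ} (hne : ∃ x, c x = i)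
    (hall : ∀ x, c x = i → G.dist v x = k + G.dist b x) :
    distClass G c v i = k + distClass G c b i := by
  apply le_antisymm
  · obtain ⟨x, hx, hd⟩ := distClass_exists (G := G) b hne
    calc distClass G c v i ≤ G.dist v x := distClass_le v hx
    _ = k + G.dist b x := hall x hx
    _ = k + distClass G c b i := by rw [hd]
  · obtain ⟨x, hx, hd⟩ := distClass_exists (G := G) v hne
    have h1 := distClass_le (G := G) b hx
    have h2 := hall x hx
    omega

end DistClass

section Tree

lemma path_eq (hacyc : G.IsAcyclic) {u v : V} {p q : G.Walk u v} (hp : p.IsPath) (hq : q.IsPath) : p = q :=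
  congrArg Subtype.val (hacyc.path_unique ⟨p, hp⟩ ⟨q, hq⟩)

noncomputable def thePath (hconn : G.Connected) (u v : V) : G.Walk u v :=
  letI := Classical.decEq V
  ((hconn.preconnected u v).exists_walk_length_eq_dist).choose.bypass

lemma thePath_isPath (hconn : G.Connected) (u v : V) : (thePath hconn u v).IsPath := by
  letI := Classical.decEq V
  exact Walk.bypass_isPath _

lemma thePath_length (hconn : G.Connected) (u v : V) : (thePath hconn u v).length = G.dist u v := by
  letI := Classical.decEq V
  exact le_antisymm
    ((Walk.length_bypass_le _).trans_eq
      ((hconn.preconnected u v).exists_walk_length_eq_dist).choose_spec)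
    (SimpleGraph.dist_le _)

lemma path_length_eq (hconn : G.Connected) (hacyc : G.IsAcyclic) {u v : V} {p : G.Walk u v} (hp : p.IsPath) :
    p.length = G.dist u v := by
  rw [path_eq hacyc hp (thePath_isPath hconn u v)]; exact thePath_length hconn u v

lemma isPath_append_of_inter {a b e : V} {p : G.Walk a b} {r : G.Walk b e}
    (hp : p.IsPath) (hr : r.IsPath) (h : ∀ x ∈ p.support, x ∈ r.support → x = b) :
    (p.append r).IsPath := by
  rw [Walk.isPath_def, Walk.support_append, List.nodup_append]
  have hpn := (Walk.isPath_def _).mp hp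
  have hrn := (Walk.isPath_def _).mp hr
  refine ⟨hpn, hrn.tail, ?_⟩
  intro x hx y hx' hxy
  subst hxy
  have hxr : x ∈ r.support := List.mem_of_mem_tail hx'
  rcases h x hx hxr with rfl
  rw [r.support_eq_cons] at hrn
  exact (List.nodup_cons.mp hrn).1 hx' 

lemma adj_dist_eq_one {u v : V} (h : G.Adj u v) : G.dist u v = 1 :=
  le_antisymm (by simpa using SimpleGraph.dist_le (Walk.cons h Walk.nil))
    ((h.reachable).pos_dist_of_ne h.ne)

end Tree

open SimpleGraph Walk

variable {V : Type*} {G : SimpleGraph V}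

lemma exists_branch_of_not_mem {v : V} (hv : v ∉ pruneKeep G) : ∃ b, IsBranch G b := by
  by_contra h
  push_neg at h
  exact hv (Or.inr (Or.inr h))

lemma mem_elim {x : V} (hbr : ∃ b, IsBranch G b) (hx : x ∈ pruneKeep G) :
    ∃ (b₁ b₂ : V) (p : G.Walk b₁ b₂), IsBranch G b₁ ∧ IsBranch G b₂ ∧
      p.IsPath ∧ x ∈ p.support := by
  rcases hx with h | h | h
  · exact ⟨x, x, Walk.nil, h, h, Walk.IsPath.nil, by simp⟩
  · exact h
  · obtain ⟨b, hb⟩ := hbr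
    exact absurd hb (h b)

lemma kept_path_subset (hconn : G.Connected) (hacyc : G.IsAcyclic) {x y : V}
    (hx : x ∈ pruneKeep G) (hy : y ∈ pruneKeep G) {p : G.Walk x y} (hp : p.IsPath) :
    ∀ z ∈ p.support, z ∈ pruneKeep G := by
  by_cases hbr : ∃ b, IsBranch G b
  · obtain ⟨b₁, b₂, P1, hb1, hb2, hP1, hxP⟩ := mem_elim hbr hx
    obtain ⟨b₃, b₄, P2, hb3, hb4, hP2, hyP⟩ := mem_elim hbr hy
    letI := Classical.decEq V
    set W : G.Walk x y := ((P1.takeUntil x hxP).reverse.append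
      ((thePath hconn b₁ b₃).append (P2.takeUntil y hyP))) with hW
    have hWsub : ∀ z ∈ W.support, z ∈ pruneKeep G := by
      intro z hz
      rw [hW, Walk.mem_support_append_iff] at hz
      rcases hz with hz | hz
      · rw [Walk.support_reverse, List.mem_reverse] at hz
        exact Or.inr (Or.inl ⟨b₁, b₂, P1, hb1, hb2, hP1, P1.support_takeUntil_subset _ hz⟩)
      · rw [Walk.mem_support_append_iff] at hz
        rcases hz with hz | hz
        · exact Or.inr (Or.inl ⟨b₁, b₃, thePath hconn b₁ b₃, hb1, hb3,
            thePath_isPath hconn b₁ b₃, hz⟩)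
        · exact Or.inr (Or.inl ⟨b₃, b₄, P2, hb3, hb4, hP2, P2.support_takeUntil_subset _ hz⟩)
    letI := Classical.decEq V
    have hpW : p = W.bypass := path_eq hacyc hp (Walk.bypass_isPath W)
    intro z hz
    rw [hpW] at hz
    exact hWsub z (W.support_bypass_subset hz)
  · intro z _
    push_neg at hbr
    exact Or.inr (Or.inr hbr)

/-- "Only last kept" walk: a path ending at a kept vertex, all of whose other
vertices are not kept. -/
def OLK (G : SimpleGraph V) {v b : V} (q : G.Walk v b) : Prop :=
  q.IsPath ∧ b ∈ pruneKeep G ∧ ∀ z ∈ q.support, z ∈ pruneKeep G → z = b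

lemma exists_olk_split : ∀ {v w : V} (p : G.Walk v w), w ∈ pruneKeep G →
    ∃ (b : V) (q : G.Walk v b) (r : G.Walk b w), p = q.append r ∧ b ∈ pruneKeep G ∧
      (∀ z ∈ q.support, z ∈ pruneKeep G → z = b) := by
  intro v w p
  induction p with
  | nil =>
    intro hw
    exact ⟨_, Walk.nil, Walk.nil, rfl, hw, by simp⟩
  | @cons a e w' h p ih =>
    intro hw
    by_cases ha : a ∈ pruneKeep G
    · exact ⟨a, Walk.nil, Walk.cons h p, rfl, ha, by simp⟩
    · obtain ⟨b', q, r, hsplit, hb, holk⟩ := ih hw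
      refine ⟨b', Walk.cons h q, r, by rw [Walk.cons_append, hsplit], hb, ?_⟩
      intro z hz hzk
      rw [Walk.support_cons, List.mem_cons] at hz
      rcases hz with rfl | hz
      · exact absurd hzk ha
      · exact holk z hz hzk

lemma exists_anchor (hconn : G.Connected) {v : V} (hv : v ∉ pruneKeep G) :
    ∃ (b : V) (q : G.Walk v b), OLK G q := by
  obtain ⟨b₀, hb₀⟩ := exists_branch_of_not_mem hv
  obtain ⟨b, q, r, hsplit, hbK, holk⟩ := exists_olk_split (thePath hconn v b₀) (Or.inl hb₀)
  have hq : q.IsPath := by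
    have h2 := thePath_isPath hconn v b₀
    rw [hsplit] at h2
    exact h2.of_append_left
  exact ⟨b, q, hq, hbK, holk⟩

noncomputable def aB (hconn : G.Connected) (v : V) (hv : v ∉ pruneKeep G) : V :=
  (exists_anchor hconn hv).choose

noncomputable def aQ (hconn : G.Connected) (v : V) (hv : v ∉ pruneKeep G) :
    G.Walk v (aB hconn v hv) :=
  (exists_anchor hconn hv).choose_spec.choose

lemma aQ_olk (hconn : G.Connected) (v : V) (hv : v ∉ pruneKeep G) :
    OLK G (aQ hconn v hv) :=
  (exists_anchor hconn hv).choose_spec.choose_spec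

noncomputable def aD (hconn : G.Connected) (v : V) (hv : v ∉ pruneKeep G) : ℕ :=
  (aQ hconn v hv).length

noncomputable def aN (hconn : G.Connected) (v : V) (hv : v ∉ pruneKeep G) : V :=
  (aQ hconn v hv).getVert (aD hconn v hv - 1)

lemma aB_mem (hconn : G.Connected) (v : V) (hv : v ∉ pruneKeep G) :
    aB hconn v hv ∈ pruneKeep G := (aQ_olk hconn v hv).2.1

lemma aQ_isPath (hconn : G.Connected) (v : V) (hv : v ∉ pruneKeep G) :
    (aQ hconn v hv).IsPath := (aQ_olk hconn v hv).1

lemma aD_pos (hconn : G.Connected) (v : V) (hv : v ∉ pruneKeep G) :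
    1 ≤ aD hconn v hv := by
  rcases Nat.eq_zero_or_pos (aD hconn v hv) with h | h
  · exact absurd ((Walk.eq_of_length_eq_zero h) ▸ aB_mem hconn v hv) hv
  · exact h

lemma dist_aB (hconn : G.Connected) (hacyc : G.IsAcyclic) (v : V) (hv : v ∉ pruneKeep G) :
    G.dist v (aB hconn v hv) = aD hconn v hv :=
  (path_length_eq hconn hacyc (aQ_isPath hconn v hv)).symm

lemma aN_adj (hconn : G.Connected) (v : V) (hv : v ∉ pruneKeep G) :
    G.Adj (aB hconn v hv) (aN hconn v hv) := by
  have hd := aD_pos hconn v hv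
  have h1 : aD hconn v hv - 1 < (aQ hconn v hv).length := by
    change aD hconn v hv - 1 < aD hconn v hv
    omega
  have h2 := (aQ hconn v hv).adj_getVert_succ h1
  have h3 : aD hconn v hv - 1 + 1 = (aQ hconn v hv).length := by
    change _ = aD hconn v hv
    omega
  rw [h3, Walk.getVert_length] at h2
  exact h2.symm

lemma olk_endpoint_unique (hconn : G.Connected) (hacyc : G.IsAcyclic) {v b b' : V}
    (hv : v ∉ pruneKeep G) {q : G.Walk v b} {q' : G.Walk v b'}
    (h : OLK G q) (h' : OLK G q') : b = b' := by
  have hssub : ∀ z ∈ (thePath hconn b b').support, z ∈ pruneKeep G :=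
    kept_path_subset hconn hacyc h.2.1 h'.2.1 (thePath_isPath hconn b b')
  have hW : (q.append (thePath hconn b b')).IsPath :=
    isPath_append_of_inter h.1 (thePath_isPath hconn b b')
      (fun x hx hxs => h.2.2 x hx (hssub x hxs))
  have heq : q.append (thePath hconn b b') = q' := path_eq hacyc hW h'.1
  have hbmem : b ∈ (q.append (thePath hconn b b')).support :=
    Walk.subset_support_append_left _ _ q.end_mem_support
  rw [heq] at hbmem
  exact h'.2.2 b hbmem h.2.1

lemma olk_spec (hconn : G.Connected) (hacyc : G.IsAcyclic) {v b : V}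
    (hv : v ∉ pruneKeep G) {q : G.Walk v b} (h : OLK G q) :
    b = aB hconn v hv ∧ q.length = aD hconn v hv ∧
      q.getVert (q.length - 1) = aN hconn v hv := by
  have hb : b = aB hconn v hv :=
    olk_endpoint_unique hconn hacyc hv h (aQ_olk hconn v hv)
  subst hb
  have hq : q = aQ hconn v hv := path_eq hacyc h.1 (aQ_isPath hconn v hv)
  subst hq
  exact ⟨rfl, rfl, rfl⟩



lemma penult_append {a b e : V} (p : G.Walk a b) (r : G.Walk b e) (hr : 1 ≤ r.length) :
    (p.append r).getVert ((p.append r).length - 1) = r.getVert (r.length - 1) := by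
  rw [Walk.length_append, Walk.getVert_append, if_neg (by omega)]
  congr 1
  omega

lemma anchor_split (hconn : G.Connected) (hacyc : G.IsAcyclic) {v : V}
    (hv : v ∉ pruneKeep G) {w : V} (hw : w ∈ pruneKeep G) {p : G.Walk v w} (hp : p.IsPath) :
    ∃ r : G.Walk (aB hconn v hv) w, p = (aQ hconn v hv).append r ∧ r.IsPath ∧
      ∀ z ∈ r.support, z ∈ pruneKeep G := by
  obtain ⟨b2, q2, r2, hsplit, hb2, holk2⟩ := exists_olk_split p hw
  have hq2 : q2.IsPath := by rw [hsplit] at hp; exact hp.of_append_left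
  have holk : OLK G q2 := ⟨hq2, hb2, holk2⟩
  obtain ⟨hb, -, -⟩ := olk_spec hconn hacyc hv holk
  subst hb
  have hq : q2 = aQ hconn v hv := path_eq hacyc hq2 (aQ_isPath hconn v hv)
  subst hq
  have hr2 : r2.IsPath := by rw [hsplit] at hp; exact hp.of_append_right
  exact ⟨r2, hsplit, hr2, kept_path_subset hconn hacyc (aB_mem hconn v hv) hw hr2⟩

lemma dist_nonkept_kept (hconn : G.Connected) (hacyc : G.IsAcyclic) {v : V}
    (hv : v ∉ pruneKeep G) {w : V} (hw : w ∈ pruneKeep G) :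
    G.dist v w = aD hconn v hv + G.dist (aB hconn v hv) w := by
  obtain ⟨r, hsplit, hr, -⟩ := anchor_split hconn hacyc hv hw (thePath_isPath hconn v w)
  have h1 : (thePath hconn v w).length = aD hconn v hv + r.length := by
    rw [hsplit, Walk.length_append]; rfl
  rw [← thePath_length hconn v w, h1, path_length_eq hconn hacyc hr]

lemma bush_mem [DecidableEq V] (hconn : G.Connected) (hacyc : G.IsAcyclic) {v : V}
    (hv : v ∉ pruneKeep G) {z : V} (hz : z ∈ (aQ hconn v hv).support)
    (hzb : z ≠ aB hconn v hv) :
    ∃ hz' : z ∉ pruneKeep G, aB hconn z hz' = aB hconn v hv ∧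
      aN hconn z hz' = aN hconn v hv ∧
      ((aQ hconn v hv).takeUntil z hz).length + aD hconn z hz' = aD hconn v hv := by
  have hzK : z ∉ pruneKeep G := fun hk => hzb ((aQ_olk hconn v hv).2.2 z hz hk)
  set r := (aQ hconn v hv).dropUntil z hz with hr
  have hrpath : r.IsPath := (aQ_isPath hconn v hv).dropUntil hz
  have holk : OLK G r :=
    ⟨hrpath, aB_mem hconn v hv,
      fun z' hz' hk => (aQ_olk hconn v hv).2.2 z' ((aQ hconn v hv).support_dropUntil_subset hz hz') hk⟩
  obtain ⟨hb, hlen, hgv⟩ := olk_spec hconn hacyc hzK holk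
  have hts := (aQ hconn v hv).take_spec hz
  have hlensum : ((aQ hconn v hv).takeUntil z hz).length + r.length = aD hconn v hv := by
    have := congrArg Walk.length hts
    rwa [Walk.length_append] at this
  have hrpos : 1 ≤ r.length := by
    rcases Nat.eq_zero_or_pos r.length with h0 | h0
    · exact absurd (Walk.eq_of_length_eq_zero h0) hzb
    · exact h0
  refine ⟨hzK, hb.symm, ?_, by omega⟩
  rw [← hgv]
  have : aN hconn v hv = ((aQ hconn v hv).takeUntil z hz |>.append r).getVert
      (((aQ hconn v hv).takeUntil z hz |>.append r).length - 1) := by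
    rw [hts]; rfl
  rw [this, penult_append _ _ hrpos]

lemma bush_cases [DecidableEq V] (hconn : G.Connected) (hacyc : G.IsAcyclic) {v : V}
    (hv : v ∉ pruneKeep G) {z : V} (hz : z ∈ (aQ hconn v hv).support) :
    z = aB hconn v hv ∨ ∃ hz' : z ∉ pruneKeep G, aB hconn z hz' = aB hconn v hv ∧
      aN hconn z hz' = aN hconn v hv := by
  by_cases hzb : z = aB hconn v hv
  · exact Or.inl hzb
  · obtain ⟨h1, h2, h3, -⟩ := bush_mem hconn hacyc hv hz hzb
    exact Or.inr ⟨h1, h2, h3⟩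

lemma dist_nonkept_nonkept (hconn : G.Connected) (hacyc : G.IsAcyclic) {v u : V}
    (hv : v ∉ pruneKeep G) (hu : u ∉ pruneKeep G)
    (hdiff : ¬(aB hconn u hu = aB hconn v hv ∧ aN hconn u hu = aN hconn v hv)) :
    G.dist v u = aD hconn v hv + G.dist (aB hconn v hv) u := by
  letI := Classical.decEq V
  by_cases hbb : aB hconn u hu = aB hconn v hv
  · have hn : aN hconn u hu ≠ aN hconn v hv := fun h => hdiff ⟨hbb, h⟩
    set X : G.Walk (aB hconn v hv) u := ((aQ hconn u hu).reverse).copy hbb rfl with hX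
    have hXpath : X.IsPath := by
      rw [hX, Walk.isPath_copy]
      exact (aQ_isPath hconn u hu).reverse
    have hXsupp : ∀ x, x ∈ X.support → x ∈ (aQ hconn u hu).support := by
      intro x hx
      rw [hX, Walk.support_copy, Walk.support_reverse, List.mem_reverse] at hx
      exact hx
    have hW : ((aQ hconn v hv).append X).IsPath := by
      apply isPath_append_of_inter (aQ_isPath hconn v hv) hXpath
      intro x hx hxX
      rcases bush_cases hconn hacyc hu (hXsupp x hxX) with h | ⟨hxK, hbx, hnx⟩
      · rw [h, hbb]
      · rcases bush_cases hconn hacyc hv hx with h' | ⟨hxK', hbx', hnx'⟩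
        · exact h'
        · exact absurd (hnx ▸ hnx' ▸ rfl : aN hconn u hu = aN hconn v hv) hn
    have h1 : G.dist v u = aD hconn v hv + X.length := by
      rw [← path_length_eq hconn hacyc hW, Walk.length_append]; rfl
    rw [h1, path_length_eq hconn hacyc hXpath]
  · set s := thePath hconn (aB hconn v hv) (aB hconn u hu) with hs
    have hssub : ∀ z ∈ s.support, z ∈ pruneKeep G :=
      kept_path_subset hconn hacyc (aB_mem hconn v hv) (aB_mem hconn u hu)
        (thePath_isPath hconn _ _)
    set X : G.Walk (aB hconn v hv) u := s.append (aQ hconn u hu).reverse with hX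
    have hXpath : X.IsPath := by
      apply isPath_append_of_inter (thePath_isPath hconn _ _) (aQ_isPath hconn u hu).reverse
      intro x hx hxr
      rw [Walk.support_reverse, List.mem_reverse] at hxr
      rcases bush_cases hconn hacyc hu hxr with h | ⟨hxK, -, -⟩
      · exact h
      · exact absurd (hssub x hx) hxK
    have hW : ((aQ hconn v hv).append X).IsPath := by
      apply isPath_append_of_inter (aQ_isPath hconn v hv) hXpath
      intro x hx hxX
      rw [hX, Walk.mem_support_append_iff] at hxX
      rcases hxX with hxs | hxr
      · exact (aQ_olk hconn v hv).2.2 x hx (hssub x hxs)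
      · rw [Walk.support_reverse, List.mem_reverse] at hxr
        rcases bush_cases hconn hacyc hu hxr with h | ⟨hxK, hbx, -⟩
        · subst h
          exact absurd ((aQ_olk hconn v hv).2.2 _ hx (aB_mem hconn u hu)) hbb
        · rcases bush_cases hconn hacyc hv hx with h' | ⟨hxK', hbx', -⟩
          · exact h'
          · exact absurd (hbx ▸ hbx' ▸ rfl : aB hconn u hu = aB hconn v hv) hbb
    have h1 : G.dist v u = aD hconn v hv + X.length := by
      rw [← path_length_eq hconn hacyc hW, Walk.length_append]; rfl
    rw [h1, path_length_eq hconn hacyc hXpath]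

lemma dist_from_nonkept (hconn : G.Connected) (hacyc : G.IsAcyclic) {v : V}
    (hv : v ∉ pruneKeep G) {u : V}
    (hu : u ∈ pruneKeep G ∨ ∃ hu' : u ∉ pruneKeep G,
      ¬(aB hconn u hu' = aB hconn v hv ∧ aN hconn u hu' = aN hconn v hv)) :
    G.dist v u = aD hconn v hv + G.dist (aB hconn v hv) u := by
  rcases hu with hu | ⟨hu', hdiff⟩
  · exact dist_nonkept_kept hconn hacyc hv hu
  · exact dist_nonkept_nonkept hconn hacyc hv hu' hdiff



lemma not_branch_of_not_kept {x : V} (hx : x ∉ pruneKeep G) : ¬ IsBranch G x :=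
  fun hb => hx (Or.inl hb)

lemma walk_ext_aux (hfin : ∀ x : V, (G.neighborSet x).Finite) (d : ℕ) :
    ∀ {x y y' prev : V}, x ∉ pruneKeep G → G.Adj prev x →
    ∀ (p : G.Walk x y) (p' : G.Walk x y'), p.IsPath → p'.IsPath →
      p.length = d → p'.length = d →
      (∀ z ∈ p.support, z ∉ pruneKeep G) → (∀ z ∈ p'.support, z ∉ pruneKeep G) →
      prev ∉ p.support → prev ∉ p'.support → y = y' := by
  induction d with
  | zero =>
    intro x y y' prev _ _ p p' _ _ hl hl' _ _ _ _
    rw [← Walk.eq_of_length_eq_zero hl, ← Walk.eq_of_length_eq_zero hl']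
  | succ d ih =>
    intro x y y' prev hx hprev p p' hp hp' hl hl' hall hall' hpv hpv'
    obtain ⟨s, hadj, t, rfl⟩ := Walk.not_nil_iff.mp
      (fun hnil => by rw [Walk.nil_iff_length_eq.mp hnil] at hl; omega)
    obtain ⟨s', hadj', t', rfl⟩ := Walk.not_nil_iff.mp
      (fun hnil => by rw [Walk.nil_iff_length_eq.mp hnil] at hl'; omega)
    have hsmem : s ∈ (Walk.cons hadj t).support := by
      rw [Walk.support_cons]; exact List.mem_cons_of_mem _ t.start_mem_support
    have hsmem' : s' ∈ (Walk.cons hadj' t').support := by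
      rw [Walk.support_cons]; exact List.mem_cons_of_mem _ t'.start_mem_support
    have hss' : s = s' := by
      by_contra hss
      have hps : prev ≠ s := fun h => hpv (h ▸ hsmem)
      have hps' : prev ≠ s' := fun h => hpv' (h ▸ hsmem')
      have h3 : ({prev, s, s'} : Set V) ⊆ G.neighborSet x := by
        intro z hz
        rcases hz with rfl | rfl | rfl
        · exact hprev.symm
        · exact hadj
        · exact hadj'
      have hc3 : ({prev, s, s'} : Set V).ncard = 3 :=
        Set.ncard_eq_three.mpr ⟨prev, s, s', hps, hps', hss, rfl⟩
      have : 3 ≤ (G.neighborSet x).ncard := by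
        rw [← hc3]
        exact Set.ncard_le_ncard h3 (hfin x)
      exact not_branch_of_not_kept hx this
    subst hss'
    have hxt : x ∉ t.support := ((Walk.cons_isPath_iff _ _).mp hp).2
    have hxt' : x ∉ t'.support := ((Walk.cons_isPath_iff _ _).mp hp').2
    refine ih (hall s hsmem) hadj t t' hp.of_cons hp'.of_cons ?_ ?_ ?_ ?_ hxt hxt'
    · simpa using hl
    · simpa using hl'
    · intro z hz
      exact hall z (by rw [Walk.support_cons]; exact List.mem_cons_of_mem _ hz)
    · intro z hz
      exact hall' z (by rw [Walk.support_cons]; exact List.mem_cons_of_mem _ hz)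

lemma nonkept_unique (hconn : G.Connected) (hacyc : G.IsAcyclic)
    (hfin : ∀ x : V, (G.neighborSet x).Finite) {v v' : V}
    (hv : v ∉ pruneKeep G) (hv' : v' ∉ pruneKeep G)
    (hb : aB hconn v' hv' = aB hconn v hv) (hn : aN hconn v' hv' = aN hconn v hv)
    (hd : aD hconn v' hv' = aD hconn v hv) : v = v' := by
  have hdpos := aD_pos hconn v hv
  set b := aB hconn v hv with hbdef
  set Q : G.Walk b v := (aQ hconn v hv).reverse with hQ
  set Q' : G.Walk b v' := ((aQ hconn v' hv').reverse).copy hb rfl with hQ'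
  have hQl : Q.length = aD hconn v hv := by rw [hQ, Walk.length_reverse]; rfl
  have hQ'l : Q'.length = aD hconn v hv := by
    rw [hQ', Walk.length_copy, Walk.length_reverse, ← hd]; rfl
  have hQpath : Q.IsPath := (aQ_isPath hconn v hv).reverse
  have hQ'path : Q'.IsPath := by
    rw [hQ', Walk.isPath_copy]; exact (aQ_isPath hconn v' hv').reverse
  have hQg : Q.getVert 1 = aN hconn v hv := by
    rw [hQ, Walk.getVert_reverse]
    rfl
  have hQ'g : Q'.getVert 1 = aN hconn v hv := by
    rw [hQ', Walk.getVert_copy, Walk.getVert_reverse, ← hn]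
    rfl
  have hQsupp : ∀ z, z ∈ Q.support → z ∈ (aQ hconn v hv).support := by
    intro z hz; rwa [hQ, Walk.support_reverse, List.mem_reverse] at hz
  have hQ'supp : ∀ z, z ∈ Q'.support → z ∈ (aQ hconn v' hv').support := by
    intro z hz; rwa [hQ', Walk.support_copy, Walk.support_reverse, List.mem_reverse] at hz
  obtain ⟨s, hadj, t, hQeq⟩ := Walk.not_nil_iff.mp
    (fun hnil => by rw [Walk.nil_iff_length_eq.mp hnil] at hQl; omega)
  obtain ⟨s', hadj', t', hQ'eq⟩ := Walk.not_nil_iff.mp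
    (fun hnil => by rw [Walk.nil_iff_length_eq.mp hnil] at hQ'l; omega)
  have hs : s = aN hconn v hv := by rw [← hQg, hQeq, Walk.getVert_cons _ _ one_ne_zero, Nat.sub_self, Walk.getVert_zero]
  have hs' : s' = aN hconn v hv := by rw [← hQ'g, hQ'eq, Walk.getVert_cons _ _ one_ne_zero, Nat.sub_self, Walk.getVert_zero]
  subst hs
  have hss' : s' = aN hconn v hv := hs'
  subst hss'
  have hbt : b ∉ t.support := by
    rw [hQeq] at hQpath; exact ((Walk.cons_isPath_iff _ _).mp hQpath).2
  have hbt' : b ∉ t'.support := by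
    rw [hQ'eq] at hQ'path; exact ((Walk.cons_isPath_iff _ _).mp hQ'path).2
  have htsupp : ∀ z ∈ t.support, z ∉ pruneKeep G := by
    intro z hz
    have hzQ : z ∈ Q.support := by
      rw [hQeq, Walk.support_cons]; exact List.mem_cons_of_mem _ hz
    have hzb : z ≠ b := fun h => hbt (h ▸ hz)
    exact fun hk => hzb ((aQ_olk hconn v hv).2.2 z (hQsupp z hzQ) hk)
  have ht'supp : ∀ z ∈ t'.support, z ∉ pruneKeep G := by
    intro z hz
    have hzQ : z ∈ Q'.support := by
      rw [hQ'eq, Walk.support_cons]; exact List.mem_cons_of_mem _ hz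
    have hzb : z ≠ b := fun h => hbt' (h ▸ hz)
    intro hk
    have := (aQ_olk hconn v' hv').2.2 z (hQ'supp z hzQ) hk
    rw [hb] at this
    exact hzb this
  have haN : aN hconn v hv ∉ pruneKeep G :=
    htsupp _ t.start_mem_support
  have htpath : t.IsPath := by rw [hQeq] at hQpath; exact hQpath.of_cons
  have ht'path : t'.IsPath := by rw [hQ'eq] at hQ'path; exact hQ'path.of_cons
  have hlt : t.length = aD hconn v hv - 1 := by
    have := congrArg Walk.length hQeq
    rw [hQl, Walk.length_cons] at this
    omega
  have hlt' : t'.length = aD hconn v hv - 1 := by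
    have := congrArg Walk.length hQ'eq
    rw [hQ'l, Walk.length_cons] at this
    omega
  exact walk_ext_aux hfin (aD hconn v hv - 1) haN hadj t t' htpath ht'path
    hlt hlt' htsupp ht'supp hbt hbt'

lemma step_toward (hconn : G.Connected) (hacyc : G.IsAcyclic) {v : V}
    (hv : v ∉ pruneKeep G) (h2 : 2 ≤ aD hconn v hv) :
    ∃ (u : V) (hu : u ∉ pruneKeep G), G.Adj v u ∧ aB hconn u hu = aB hconn v hv ∧
      aN hconn u hu = aN hconn v hv ∧ aD hconn u hu = aD hconn v hv - 1 := by
  obtain ⟨u, hadj, t, hQeq⟩ := Walk.not_nil_iff.mp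
    (fun hnil => by
      have := Walk.nil_iff_length_eq.mp hnil
      change (aQ hconn v hv).length = 0 at this
      have := aD_pos hconn v hv
      change 1 ≤ (aQ hconn v hv).length at this
      omega)
  have htlen : t.length + 1 = aD hconn v hv := by
    have := congrArg Walk.length hQeq
    rw [Walk.length_cons] at this
    change (aQ hconn v hv).length = _ at this
    change t.length + 1 = (aQ hconn v hv).length
    omega
  have htpath : t.IsPath := by
    have := aQ_isPath hconn v hv
    rw [hQeq] at this
    exact this.of_cons
  have humem : u ∈ (aQ hconn v hv).support := by
    rw [hQeq, Walk.support_cons]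
    exact List.mem_cons_of_mem _ t.start_mem_support
  have hub : u ≠ aB hconn v hv := by
    intro h
    subst h
    have : t = Walk.nil := path_eq hacyc htpath Walk.IsPath.nil
    rw [this] at htlen
    simp at htlen
    omega
  have huK : u ∉ pruneKeep G := fun hk => hub ((aQ_olk hconn v hv).2.2 u humem hk)
  have holk : OLK G t := by
    refine ⟨htpath, aB_mem hconn v hv, ?_⟩
    intro z hz hk
    refine (aQ_olk hconn v hv).2.2 z ?_ hk
    rw [hQeq, Walk.support_cons]
    exact List.mem_cons_of_mem _ hz
  obtain ⟨hbu, hlu, hgu⟩ := olk_spec hconn hacyc huK holk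
  refine ⟨u, huK, hadj, hbu.symm, ?_, by omega⟩
  rw [← hgu]
  have hgv : aN hconn v hv = (aQ hconn v hv).getVert (aD hconn v hv - 1) := rfl
  rw [hgv, hQeq, Walk.getVert_cons _ _ (by omega)]
  congr 1
  omega

lemma adj_structure (hconn : G.Connected) (hacyc : G.IsAcyclic) {v : V}
    (hv : v ∉ pruneKeep G) {u : V} (hadj : G.Adj v u) :
    (u = aB hconn v hv ∧ aD hconn v hv = 1) ∨
    ∃ hu : u ∉ pruneKeep G, aB hconn u hu = aB hconn v hv ∧
      (aD hconn u hu = aD hconn v hv + 1 ∨ aD hconn u hu + 1 = aD hconn v hv) := by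
  by_cases huK : u ∈ pruneKeep G
  · left
    have hpp : (Walk.cons hadj Walk.nil : G.Walk v u).IsPath := by
      rw [Walk.cons_isPath_iff]
      refine ⟨Walk.IsPath.nil, ?_⟩
      simp [hadj.ne]
    obtain ⟨r, hsplit, -, -⟩ := anchor_split hconn hacyc hv huK hpp
    have hlen := congrArg Walk.length hsplit
    rw [Walk.length_cons, Walk.length_nil, Walk.length_append] at hlen
    have hd := aD_pos hconn v hv
    change 1 ≤ (aQ hconn v hv).length at hd
    have hr0 : r.length = 0 := by omega
    have hb := Walk.eq_of_length_eq_zero hr0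
    constructor
    · exact hb.symm
    · change (aQ hconn v hv).length = 1
      omega
  · right
    refine ⟨huK, ?_⟩
    letI := Classical.decEq V
    by_cases hmem : u ∈ (aQ hconn v hv).support
    · have hub : u ≠ aB hconn v hv := fun h => huK (h ▸ aB_mem hconn v hv)
      obtain ⟨hu', hbu, -, hsum⟩ := bush_mem hconn hacyc hv hmem hub
      have htul : ((aQ hconn v hv).takeUntil u hmem).length = 1 := by
        rw [path_length_eq hconn hacyc ((aQ_isPath hconn v hv).takeUntil hmem),
          adj_dist_eq_one hadj]
      exact ⟨hbu, Or.inr (by omega)⟩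
    · set W : G.Walk u (aB hconn v hv) := Walk.cons hadj.symm (aQ hconn v hv) with hW
      have hWpath : W.IsPath := by
        rw [hW, Walk.cons_isPath_iff]
        exact ⟨aQ_isPath hconn v hv, hmem⟩
      have holk : OLK G W := by
        refine ⟨hWpath, aB_mem hconn v hv, ?_⟩
        intro z hz hk
        rw [hW, Walk.support_cons, List.mem_cons] at hz
        rcases hz with rfl | hz
        · exact absurd hk huK
        · exact (aQ_olk hconn v hv).2.2 z hz hk
      obtain ⟨hb, hl, -⟩ := olk_spec hconn hacyc huK holk
      refine ⟨hb.symm, Or.inl ?_⟩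
      rw [← hl, hW, Walk.length_cons]
      rfl



lemma lift_walk : ∀ {x y : V} (p : G.Walk x y) (hx : x ∈ pruneKeep G)
    (hy : y ∈ pruneKeep G), (∀ z ∈ p.support, z ∈ pruneKeep G) →
    ∃ q : (prune G).Walk ⟨x, hx⟩ ⟨y, hy⟩, q.length = p.length := by
  intro x y p
  induction p with
  | nil =>
    intro hx hy _
    exact ⟨Walk.nil, rfl⟩
  | @cons a e w' h p ih =>
    intro hx hy hsub
    have he : e ∈ pruneKeep G := hsub e (by rw [Walk.support_cons]; exact List.mem_cons_of_mem _ p.start_mem_support)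
    have hadj : (prune G).Adj ⟨a, hx⟩ ⟨e, he⟩ := h
    obtain ⟨q, hq⟩ := ih he hy
      (fun z hz => hsub z (by rw [Walk.support_cons]; exact List.mem_cons_of_mem _ hz))
    exact ⟨Walk.cons hadj q, by rw [Walk.length_cons, Walk.length_cons, hq]⟩

lemma down_walk {a b : pruneKeep G} (q : (prune G).Walk a b) :
    ∃ p : G.Walk a.1 b.1, p.length = q.length := by
  induction q with
  | nil => exact ⟨Walk.nil, rfl⟩
  | @cons a e w' h q ih =>
    obtain ⟨p, hp⟩ := ih
    exact ⟨Walk.cons h p, by show p.length + 1 = q.length + 1; rw [hp]⟩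

lemma prune_reachable (hconn : G.Connected) (hacyc : G.IsAcyclic)
    (a b : pruneKeep G) : (prune G).Reachable a b := by
  obtain ⟨x, hx⟩ := a
  obtain ⟨y, hy⟩ := b
  obtain ⟨q, -⟩ := lift_walk (thePath hconn x y) hx hy
    (kept_path_subset hconn hacyc hx hy (thePath_isPath hconn x y))
  exact ⟨q⟩

lemma prune_dist_eq (hconn : G.Connected) (hacyc : G.IsAcyclic)
    (a b : pruneKeep G) : (prune G).dist a b = G.dist a.1 b.1 := by
  apply le_antisymm
  · obtain ⟨x, hx⟩ := a
    obtain ⟨y, hy⟩ := b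
    obtain ⟨q, hq⟩ := lift_walk (thePath hconn x y) hx hy
      (kept_path_subset hconn hacyc hx hy (thePath_isPath hconn x y))
    have := SimpleGraph.dist_le q
    rw [hq, thePath_length hconn x y] at this
    exact this
  · obtain ⟨w, hw⟩ := (prune_reachable hconn hacyc a b).exists_walk_length_eq_dist
    obtain ⟨p, hp⟩ := down_walk w
    have := SimpleGraph.dist_le p
    rw [hp, hw] at this
    exact this

end LocAux

open LocAux SimpleGraph in
theorem stmt_16 {V : Type*} (G : SimpleGraph V)
    (hconn : G.Connected) (hacyc : G.IsAcyclic)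
    (Δ : ℕ) (hdeg : ∀ v : V, (G.neighborSet v).Finite ∧ (G.neighborSet v).ncard ≤ Δ)
    (m : ℕ) (hm : ∃ c : pruneKeep G → Fin m, IsLocatingColoring (prune G) c) :
    ∃ c : V → Fin (m + Δ), IsLocatingColoring G c := by
  classical
  obtain ⟨c', hc'prop, hc'inj⟩ := hm
  have hfin : ∀ x : V, (G.neighborSet x).Finite := fun x => (hdeg x).1
  -- injections from neighbor sets into `Fin Δ`
  have hJ : ∀ b : V, ∃ f : G.neighborSet b → Fin Δ, Function.Injective f := by
    intro b
    haveI := (hdeg b).1.fintype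
    have hcard : Fintype.card (G.neighborSet b) ≤ Δ := by
      calc Fintype.card (G.neighborSet b) = Nat.card (G.neighborSet b) :=
            (Nat.card_eq_fintype_card).symm
        _ = (G.neighborSet b).ncard := (Nat.card_coe_set_eq _)
        _ ≤ Δ := (hdeg b).2
    obtain ⟨f⟩ := Function.Embedding.nonempty_of_card_le (hcard.trans_eq (Fintype.card_fin Δ).symm)
    exact ⟨f, f.injective⟩
  choose J hJinj using hJ
  have Jcongr : ∀ (b b' n n' : V) (_ : b = b') (_ : n = n')
      (h1 : n ∈ G.neighborSet b) (h2 : n' ∈ G.neighborSet b'),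
      J b ⟨n, h1⟩ = J b' ⟨n', h2⟩ := by
    intro b b' n n' hb hn h1 h2
    subst hb; subst hn; rfl
  set ca : Fin m → Fin (m + Δ) := Fin.castLE (Nat.le_add_right m Δ) with hca
  set cn : Fin Δ → Fin (m + Δ) := Fin.natAdd m with hcn
  have ca_ne_cn : ∀ i j, ca i ≠ cn j := by
    intro i j h
    have := congrArg Fin.val h
    simp only [hca, hcn, Fin.coe_castLE, Fin.coe_natAdd] at this
    omega
  have ca_inj : ∀ {i j}, ca i = ca j → i = j := by
    intro i j h
    have := congrArg Fin.val h
    simp only [hca, Fin.coe_castLE] at this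
    exact Fin.ext this
  have cn_inj : ∀ {i j}, cn i = cn j → i = j := by
    intro i j h
    have := congrArg Fin.val h
    simp only [hcn, Fin.coe_natAdd] at this
    exact Fin.ext (by omega)
  -- the coloring
  set c : V → Fin (m + Δ) := fun v =>
    if hv : v ∈ pruneKeep G then ca (c' ⟨v, hv⟩)
    else if Even (aD hconn v hv) then ca (c' ⟨aB hconn v hv, aB_mem hconn v hv⟩)
    else cn (J (aB hconn v hv) ⟨aN hconn v hv, (aN_adj hconn v hv)⟩) with hc
  have c_kept : ∀ (x) (hx : x ∈ pruneKeep G), c x = ca (c' ⟨x, hx⟩) := by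
    intro x hx; simp only [hc]; rw [dif_pos hx]
  have c_even : ∀ (v) (hv : v ∉ pruneKeep G), Even (aD hconn v hv) →
      c v = ca (c' ⟨aB hconn v hv, aB_mem hconn v hv⟩) := by
    intro v hv h; simp only [hc]; rw [dif_neg hv, if_pos h]
  have c_odd : ∀ (v) (hv : v ∉ pruneKeep G), ¬ Even (aD hconn v hv) →
      c v = cn (J (aB hconn v hv) ⟨aN hconn v hv, (aN_adj hconn v hv)⟩) := by
    intro v hv h; simp only [hc]; rw [dif_neg hv, if_neg h]
  have c_cases_ca : ∀ (u) (i₀ : Fin m), c u = ca i₀ →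
      (∃ hu : u ∈ pruneKeep G, c' ⟨u, hu⟩ = i₀) ∨
      (∃ hu : u ∉ pruneKeep G, Even (aD hconn u hu) ∧
        c' ⟨aB hconn u hu, aB_mem hconn u hu⟩ = i₀) := by
    intro u i₀ h
    by_cases hu : u ∈ pruneKeep G
    · left
      refine ⟨hu, ca_inj ?_⟩
      rw [← c_kept u hu, h]
    · right
      by_cases he : Even (aD hconn u hu)
      · refine ⟨hu, he, ca_inj ?_⟩
        rw [← c_even u hu he, h]
      · exfalso
        rw [c_odd u hu he] at h
        exact ca_ne_cn i₀ _ h.symm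
  have c_cases_cn : ∀ (u) (j : Fin Δ), c u = cn j →
      ∃ hu : u ∉ pruneKeep G, ¬ Even (aD hconn u hu) ∧
        J (aB hconn u hu) ⟨aN hconn u hu, (aN_adj hconn u hu)⟩ = j := by
    intro u j h
    by_cases hu : u ∈ pruneKeep G
    · exfalso
      rw [c_kept u hu] at h
      exact ca_ne_cn _ j h
    · by_cases he : Even (aD hconn u hu)
      · exfalso
        rw [c_even u hu he] at h
        exact ca_ne_cn _ j h
      · refine ⟨hu, he, cn_inj ?_⟩
        rw [← c_odd u hu he, h]
  -- H3 : codes of kept vertices at old colors agree with the prune codes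
  have H3 : ∀ (x) (hx : x ∈ pruneKeep G) (i₀ : Fin m),
      distClass G c x (ca i₀) = distClass (prune G) c' ⟨x, hx⟩ i₀ := by
    intro x hx i₀
    by_cases hne : ∃ w : pruneKeep G, c' w = i₀
    · apply le_antisymm
      · obtain ⟨w, hw, hwd⟩ := distClass_exists (G := prune G) ⟨x, hx⟩ hne
        have hcw : c w.1 = ca i₀ := by rw [c_kept w.1 w.2]; exact congrArg ca hw
        calc distClass G c x (ca i₀) ≤ G.dist x w.1 := distClass_le x hcw
          _ = (prune G).dist ⟨x, hx⟩ w := (prune_dist_eq hconn hacyc ⟨x, hx⟩ w).symm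
          _ = distClass (prune G) c' ⟨x, hx⟩ i₀ := hwd
      · obtain ⟨w0, hw0⟩ := hne
        have hGne : ∃ u, c u = ca i₀ := ⟨w0.1, by rw [c_kept w0.1 w0.2]; exact congrArg ca hw0⟩
        obtain ⟨u, hu, hud⟩ := distClass_exists (G := G) x hGne
        rcases c_cases_ca u i₀ hu with ⟨huK, hcu⟩ | ⟨huK, heu, hcu⟩
        · calc distClass (prune G) c' ⟨x, hx⟩ i₀
              ≤ (prune G).dist ⟨x, hx⟩ ⟨u, huK⟩ := distClass_le _ hcu
            _ = G.dist x u := prune_dist_eq hconn hacyc _ _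
            _ = distClass G c x (ca i₀) := hud
        · have h1 : G.dist u x = aD hconn u huK + G.dist (aB hconn u huK) x :=
            dist_nonkept_kept hconn hacyc huK hx
          have h2 : (prune G).dist ⟨x, hx⟩ ⟨aB hconn u huK, aB_mem hconn u huK⟩
              = G.dist x (aB hconn u huK) := prune_dist_eq hconn hacyc _ _
          have h3 := distClass_le (G := prune G) (⟨x, hx⟩ : pruneKeep G) hcu
          rw [← hud, SimpleGraph.dist_comm, h1]
          rw [h2] at h3
          rw [SimpleGraph.dist_comm] at h3
          omega
    · push_neg at hne
      have hGe : ∀ u, c u ≠ ca i₀ := by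
        intro u hu
        rcases c_cases_ca u i₀ hu with ⟨huK, hcu⟩ | ⟨huK, -, hcu⟩
        · exact hne ⟨u, huK⟩ hcu
        · exact hne ⟨aB hconn u huK, aB_mem hconn u huK⟩ hcu
      rw [distClass_empty x hGe, distClass_empty (G := prune G) ⟨x, hx⟩ (fun w hw => hne w hw)]
  -- H4c : codes of non-kept vertices at "other" colors
  have H4c : ∀ (v) (hv : v ∉ pruneKeep G) (i : Fin (m + Δ)), (∃ x, c x = i) →
      i ≠ ca (c' ⟨aB hconn v hv, aB_mem hconn v hv⟩) →
      i ≠ cn (J (aB hconn v hv) ⟨aN hconn v hv, (aN_adj hconn v hv)⟩) →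
      distClass G c v i = aD hconn v hv + distClass G c (aB hconn v hv) i := by
    intro v hv i hne hia hin
    apply distClass_shift hne
    intro x hx
    apply dist_from_nonkept hconn hacyc hv
    by_cases hxK : x ∈ pruneKeep G
    · exact Or.inl hxK
    · refine Or.inr ⟨hxK, ?_⟩
      rintro ⟨hbx, hnx⟩
      by_cases hex : Even (aD hconn x hxK)
      · have h1 := c_even x hxK hex
        rw [hx] at h1
        have h2 : (⟨aB hconn x hxK, aB_mem hconn x hxK⟩ : pruneKeep G)
            = ⟨aB hconn v hv, aB_mem hconn v hv⟩ := Subtype.ext hbx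
        rw [h2] at h1
        exact hia h1
      · have h1 := c_odd x hxK hex
        rw [hx] at h1
        exact hin (h1.trans (congrArg cn (Jcongr (aB hconn x hxK) (aB hconn v hv) (aN hconn x hxK) (aN hconn v hv)
          hbx hnx _ _)))
  have H4a : ∀ (v) (hv : v ∉ pruneKeep G),
      distClass G c v (ca (c' ⟨aB hconn v hv, aB_mem hconn v hv⟩))
        = if Even (aD hconn v hv) then 0 else 1 := by
    intro v hv
    by_cases he : Even (aD hconn v hv)
    · rw [if_pos he]
      exact distClass_self v (c_even v hv he)
    · rw [if_neg he]
      refine distClass_eq_one (fun x _ => hconn.preconnected v x) ?_ ?_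
      · by_cases h1 : aD hconn v hv = 1
        · exact ⟨aB hconn v hv, c_kept _ (aB_mem hconn v hv),
            by rw [dist_aB hconn hacyc v hv, h1]⟩
        · have h2 : 2 ≤ aD hconn v hv := by have := aD_pos hconn v hv; omega
          obtain ⟨u, hu, hadj, hbu, hnu, hdu⟩ := step_toward hconn hacyc hv h2
          have heu : Even (aD hconn u hu) := by
            rw [Nat.even_iff] at he ⊢
            omega
          refine ⟨u, ?_, by rw [adj_dist_eq_one hadj]⟩
          rw [c_even u hu heu]
          exact congrArg ca (congrArg c' (Subtype.ext hbu))
      · rw [c_odd v hv he]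
        exact fun h => ca_ne_cn _ _ h.symm
  have H4b : ∀ (v) (hv : v ∉ pruneKeep G),
      distClass G c v (cn (J (aB hconn v hv) ⟨aN hconn v hv, aN_adj hconn v hv⟩))
        = if Even (aD hconn v hv) then 1 else 0 := by
    intro v hv
    by_cases he : Even (aD hconn v hv)
    · rw [if_pos he]
      refine distClass_eq_one (fun x _ => hconn.preconnected v x) ?_ ?_
      · have h2 : 2 ≤ aD hconn v hv := by
          have := aD_pos hconn v hv
          rw [Nat.even_iff] at he
          omega
        obtain ⟨u, hu, hadj, hbu, hnu, hdu⟩ := step_toward hconn hacyc hv h2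
        have hou : ¬ Even (aD hconn u hu) := by
          rw [Nat.even_iff] at he ⊢
          omega
        refine ⟨u, ?_, by rw [adj_dist_eq_one hadj]⟩
        rw [c_odd u hu hou]
        exact congrArg cn (Jcongr _ _ _ _ hbu hnu _ _)
      · rw [c_even v hv he]
        exact ca_ne_cn _ _
    · rw [if_neg he]
      exact distClass_self v (c_odd v hv he)
  have bush_cn_ne : ∀ (v) (hv : v ∉ pruneKeep G),
      ∃ x, c x = cn (J (aB hconn v hv) ⟨aN hconn v hv, aN_adj hconn v hv⟩) := by
    intro v hv
    by_cases he : Even (aD hconn v hv)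
    · have h2 : 2 ≤ aD hconn v hv := by
        have := aD_pos hconn v hv
        rw [Nat.even_iff] at he
        omega
      obtain ⟨u, hu, hadj, hbu, hnu, hdu⟩ := step_toward hconn hacyc hv h2
      have hou : ¬ Even (aD hconn u hu) := by
        rw [Nat.even_iff] at he ⊢
        omega
      exact ⟨u, by rw [c_odd u hu hou]; exact congrArg cn (Jcongr _ _ _ _ hbu hnu _ _)⟩
    · exact ⟨v, c_odd v hv he⟩
  have kept_nbr : ∀ (x) (hx : x ∈ pruneKeep G) (y) (hy : y ∈ pruneKeep G), y ≠ x →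
      ∃ (z : V) (_ : z ∈ pruneKeep G), G.Adj x z := by
    intro x hx y hy hyx
    have hpos : 0 < (thePath hconn x y).length := by
      rw [thePath_length hconn x y]
      exact hconn.pos_dist_of_ne (fun h => hyx h.symm)
    have hadj := (thePath hconn x y).adj_getVert_succ hpos
    rw [Walk.getVert_zero] at hadj
    have hzmem : (thePath hconn x y).getVert 1 ∈ (thePath hconn x y).support :=
      Walk.mem_support_iff_exists_getVert.mpr ⟨1, rfl, by omega⟩
    exact ⟨_, kept_path_subset hconn hacyc hx hy (thePath_isPath hconn x y) _ hzmem, hadj⟩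
  have kept_code_one : ∀ (x) (hx : x ∈ pruneKeep G) (z) (hz : z ∈ pruneKeep G),
      G.Adj x z → distClass (prune G) c' ⟨x, hx⟩ (c' ⟨z, hz⟩) = 1 := by
    intro x hx z hz hadj
    have hpadj : (prune G).Adj ⟨x, hx⟩ ⟨z, hz⟩ := hadj
    refine distClass_eq_one (fun w _ => prune_reachable hconn hacyc _ w) ?_ ?_
    · exact ⟨⟨z, hz⟩, rfl, by rw [prune_dist_eq hconn hacyc]; exact adj_dist_eq_one hadj⟩
    · exact hc'prop _ _ hpadj
  have pendant : ∀ (x) (hx : x ∈ pruneKeep G) (z) (hzadj : G.Adj x z) (hzK : z ∉ pruneKeep G),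
      aB hconn z hzK = x ∧ aD hconn z hzK = 1 ∧ aN hconn z hzK = z := by
    intro x hx z hzadj hzK
    have hpath : (Walk.cons hzadj.symm Walk.nil : G.Walk z x).IsPath := by
      rw [Walk.cons_isPath_iff]
      exact ⟨Walk.IsPath.nil, by simp [hzadj.ne']⟩
    have holk : OLK G (Walk.cons hzadj.symm Walk.nil : G.Walk z x) := by
      refine ⟨hpath, hx, ?_⟩
      intro w hw hwk
      rw [Walk.support_cons, List.mem_cons] at hw
      rcases hw with rfl | hw
      · exact absurd hwk hzK
      · simpa using hw
    obtain ⟨hb, hl, hg⟩ := olk_spec hconn hacyc hzK holk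
    exact ⟨hb.symm, by rw [← hl]; rfl, hg.symm⟩
  have pick_nbr : ∀ (b₀ : V), IsBranch G b₀ → ∀ (n : V), ∃ z ∈ G.neighborSet b₀, z ≠ n := by
    intro b₀ hbr n
    by_contra h
    push_neg at h
    have hsub : G.neighborSet b₀ ⊆ {n} := fun z hz => h z hz
    have h1 := Set.ncard_le_ncard hsub (Set.finite_singleton n)
    rw [Set.ncard_singleton] at h1
    have h3 : (3 : ℕ) ≤ (G.neighborSet b₀).ncard := hbr
    omega
  have hproper : ∀ u v, G.Adj u v → c u ≠ c v := by
    intro u v hadj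
    by_cases huK : u ∈ pruneKeep G <;> by_cases hvK : v ∈ pruneKeep G
    · rw [c_kept u huK, c_kept v hvK]
      exact fun h => hc'prop ⟨u, huK⟩ ⟨v, hvK⟩ hadj (ca_inj h)
    · rcases adj_structure hconn hacyc hvK hadj.symm with ⟨-, hd1⟩ | ⟨hu', -, -⟩
      · have hodd : ¬ Even (aD hconn v hvK) := by rw [Nat.even_iff]; omega
        rw [c_kept u huK, c_odd v hvK hodd]
        exact ca_ne_cn _ _
      · exact absurd huK hu'
    · rcases adj_structure hconn hacyc huK hadj with ⟨-, hd1⟩ | ⟨hv', -, -⟩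
      · have hodd : ¬ Even (aD hconn u huK) := by rw [Nat.even_iff]; omega
        rw [c_odd u huK hodd, c_kept v hvK]
        exact fun h => ca_ne_cn _ _ h.symm
      · exact absurd hvK hv'
    · rcases adj_structure hconn hacyc huK hadj with ⟨hvb, -⟩ | ⟨hv', hbb, hd⟩
      · exact absurd (hvb ▸ aB_mem hconn u huK) hvK
      · have hirr : aD hconn v hv' = aD hconn v hvK := rfl
        rw [hirr] at hd
        by_cases he : Even (aD hconn u huK)
        · have hov : ¬ Even (aD hconn v hvK) := by
            rw [Nat.even_iff] at he ⊢
            omega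
          rw [c_even u huK he, c_odd v hvK hov]
          exact ca_ne_cn _ _
        · have hev : Even (aD hconn v hvK) := by
            rw [Nat.even_iff] at he ⊢
            omega
          rw [c_odd u huK he, c_even v hvK hev]
          exact fun h => ca_ne_cn _ _ h.symm
  have kept_nonkept : ∀ (x) (hx : x ∈ pruneKeep G) (v) (hv : v ∉ pruneKeep G),
      (∀ i, distClass G c x i = distClass G c v i) → False := by
    intro x hx v hv hcode
    by_cases he : Even (aD hconn v hv)
    · have h2 : 2 ≤ aD hconn v hv := by
        have := aD_pos hconn v hv
        rw [Nat.even_iff] at he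
        omega
      by_cases hK2 : ∃ y, y ∈ pruneKeep G ∧ y ≠ x
      · obtain ⟨y, hy, hyx⟩ := hK2
        obtain ⟨z, hz, hadj⟩ := kept_nbr x hx y hy hyx
        have hone : distClass G c x (ca (c' ⟨z, hz⟩)) = 1 := by
          rw [H3 x hx]
          exact kept_code_one x hx z hz hadj
        rw [hcode] at hone
        by_cases hcb : c' ⟨z, hz⟩ = c' ⟨aB hconn v hv, aB_mem hconn v hv⟩
        · have h0 : distClass G c v (ca (c' ⟨z, hz⟩)) = 0 := by
            rw [hcb, H4a v hv]
            exact if_pos he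
          omega
        · have hsh : distClass G c v (ca (c' ⟨z, hz⟩)) =
              aD hconn v hv + distClass G c (aB hconn v hv) (ca (c' ⟨z, hz⟩)) :=
            H4c v hv _ ⟨z, c_kept z hz⟩ (fun h => hcb (ca_inj h)) (fun h => ca_ne_cn _ _ h)
          omega
      · push_neg at hK2
        have hbx : aB hconn v hv = x := hK2 _ (aB_mem hconn v hv)
        have hxbr : IsBranch G x := by
          obtain ⟨bb, hbb⟩ := exists_branch_of_not_mem hv
          have := hK2 bb (Or.inl hbb)
          exact this ▸ hbb
        obtain ⟨z, hzmem, hzn⟩ := pick_nbr x hxbr (aN hconn v hv)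
        have hzadj : G.Adj x z := hzmem
        have hzK : z ∉ pruneKeep G := fun hk => hzadj.ne' (hK2 z hk)
        obtain ⟨hbz, hdz, hnz⟩ := pendant x hx z hzadj hzK
        have hoz : ¬ Even (aD hconn z hzK) := by rw [Nat.even_iff, hdz]; omega
        have hcz : c z = cn (J x ⟨z, hzmem⟩) := by
          rw [c_odd z hzK hoz]
          exact congrArg cn (Jcongr _ _ _ _ hbz hnz _ _)
        have hJne : cn (J x ⟨z, hzmem⟩)
            ≠ cn (J (aB hconn v hv) ⟨aN hconn v hv, aN_adj hconn v hv⟩) := by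
          intro h
          have h2' := cn_inj h
          rw [Jcongr (aB hconn v hv) x (aN hconn v hv) (aN hconn v hv) hbx rfl
            (aN_adj hconn v hv) (by rw [← hbx]; exact aN_adj hconn v hv)] at h2'
          exact hzn (congrArg Subtype.val (hJinj x h2'))
        have hvsh : distClass G c v (cn (J x ⟨z, hzmem⟩)) =
            aD hconn v hv + distClass G c (aB hconn v hv) (cn (J x ⟨z, hzmem⟩)) :=
          H4c v hv _ ⟨z, hcz⟩ (fun h => ca_ne_cn _ _ h.symm) hJne
        rw [hbx] at hvsh
        have heq := hcode (cn (J x ⟨z, hzmem⟩))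
        omega
    · have h0 : distClass G c v
          (cn (J (aB hconn v hv) ⟨aN hconn v hv, aN_adj hconn v hv⟩)) = 0 := by
        rw [H4b v hv]
        exact if_neg he
      have hx0 : distClass G c x
          (cn (J (aB hconn v hv) ⟨aN hconn v hv, aN_adj hconn v hv⟩)) ≠ 0 :=
        distClass_ne_zero (fun w _ => hconn.preconnected x w) ⟨v, c_odd v hv he⟩
          (by rw [c_kept x hx]; exact ca_ne_cn _ _)
      rw [hcode] at hx0
      exact hx0 h0
  have nn : ∀ (u) (hu : u ∉ pruneKeep G) (v) (hv : v ∉ pruneKeep G),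
      (∀ i, distClass G c u i = distClass G c v i) → u = v := by
    intro u hu v hv hcode
    have par_contra : ∀ (u') (hu' : u' ∉ pruneKeep G) (v') (hv' : v' ∉ pruneKeep G),
        (∀ i, distClass G c u' i = distClass G c v' i) →
        Even (aD hconn u' hu') → ¬ Even (aD hconn v' hv') → False := by
      intro u' hu' v' hv' hcode' heu hov
      have h0 : distClass G c u' (ca (c' ⟨aB hconn u' hu', aB_mem hconn u' hu'⟩)) = 0 := by
        rw [H4a u' hu']
        exact if_pos heu
      have h1 : distClass G c v' (ca (c' ⟨aB hconn u' hu', aB_mem hconn u' hu'⟩)) ≠ 0 :=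
        distClass_ne_zero (fun w _ => hconn.preconnected v' w)
          ⟨aB hconn u' hu', c_kept _ (aB_mem hconn u' hu')⟩
          (by rw [c_odd v' hv' hov]; exact fun h => ca_ne_cn _ _ h.symm)
      rw [hcode'] at h0
      exact h1 h0
    have hpar : (Even (aD hconn u hu) ↔ Even (aD hconn v hv)) := by
      constructor
      · intro h
        by_contra h'
        exact par_contra u hu v hv hcode h h'
      · intro h
        by_contra h'
        exact par_contra v hv u hu (fun i => (hcode i).symm) h h'
    by_cases hJeq : J (aB hconn u hu) ⟨aN hconn u hu, aN_adj hconn u hu⟩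
        = J (aB hconn v hv) ⟨aN hconn v hv, aN_adj hconn v hv⟩
    case neg =>
      exfalso
      by_cases he : Even (aD hconn u hu)
      · have hev : Even (aD hconn v hv) := hpar.mp he
        have h1 : distClass G c u
            (cn (J (aB hconn u hu) ⟨aN hconn u hu, aN_adj hconn u hu⟩)) = 1 := by
          rw [H4b u hu]
          exact if_pos he
        have hvsh : distClass G c v
            (cn (J (aB hconn u hu) ⟨aN hconn u hu, aN_adj hconn u hu⟩)) =
            aD hconn v hv + distClass G c (aB hconn v hv)
              (cn (J (aB hconn u hu) ⟨aN hconn u hu, aN_adj hconn u hu⟩)) :=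
          H4c v hv _ (bush_cn_ne u hu) (fun h => ca_ne_cn _ _ h.symm)
            (fun h => hJeq (cn_inj h))
        have hbpos : 1 ≤ distClass G c (aB hconn v hv)
            (cn (J (aB hconn u hu) ⟨aN hconn u hu, aN_adj hconn u hu⟩)) :=
          distClass_pos (fun w _ => hconn.preconnected _ w) (bush_cn_ne u hu)
            (by rw [c_kept _ (aB_mem hconn v hv)]; exact ca_ne_cn _ _)
        have hv2 : 2 ≤ aD hconn v hv := by
          have := aD_pos hconn v hv
          rw [Nat.even_iff] at hev
          omega
        have := hcode (cn (J (aB hconn u hu) ⟨aN hconn u hu, aN_adj hconn u hu⟩))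
        omega
      · have hov : ¬ Even (aD hconn v hv) := fun h => he (hpar.mpr h)
        have h0 : distClass G c u
            (cn (J (aB hconn u hu) ⟨aN hconn u hu, aN_adj hconn u hu⟩)) = 0 := by
          rw [H4b u hu]
          exact if_neg he
        have h1 : distClass G c v
            (cn (J (aB hconn u hu) ⟨aN hconn u hu, aN_adj hconn u hu⟩)) ≠ 0 :=
          distClass_ne_zero (fun w _ => hconn.preconnected v w) (bush_cn_ne u hu)
            (by rw [c_odd v hv hov]; exact fun h => hJeq (cn_inj h).symm)
        rw [hcode] at h0
        exact h1 h0
    case pos =>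
      by_cases hbb : aB hconn u hu = aB hconn v hv
      · have hnn : aN hconn u hu = aN hconn v hv := by
          have h1 : J (aB hconn v hv) ⟨aN hconn u hu, by rw [← hbb]; exact aN_adj hconn u hu⟩
              = J (aB hconn v hv) ⟨aN hconn v hv, aN_adj hconn v hv⟩ := by
            rw [← hJeq]
            exact Jcongr _ _ _ _ hbb.symm rfl _ _
          exact congrArg Subtype.val (hJinj _ h1)
        by_cases hdd : aD hconn u hu = aD hconn v hv
        · exact nonkept_unique hconn hacyc hfin hu hv hbb.symm hnn.symm hdd.symm
        · exfalso
          obtain ⟨i, hine, hinca, hincn⟩ :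
              ∃ i : Fin (m + Δ), (∃ x, c x = i) ∧
                i ≠ ca (c' ⟨aB hconn u hu, aB_mem hconn u hu⟩) ∧
                i ≠ cn (J (aB hconn u hu) ⟨aN hconn u hu, aN_adj hconn u hu⟩) := by
            by_cases hK2 : ∃ y, y ∈ pruneKeep G ∧ y ≠ aB hconn u hu
            · obtain ⟨y, hy, hyb⟩ := hK2
              obtain ⟨z, hz, hadj⟩ := kept_nbr _ (aB_mem hconn u hu) y hy hyb
              refine ⟨ca (c' ⟨z, hz⟩), ⟨z, c_kept z hz⟩, ?_, fun h => ca_ne_cn _ _ h⟩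
              intro h
              exact hc'prop _ _
                (show (prune G).Adj ⟨aB hconn u hu, aB_mem hconn u hu⟩ ⟨z, hz⟩ from hadj)
                (ca_inj h).symm
            · push_neg at hK2
              have hxbr : IsBranch G (aB hconn u hu) := by
                obtain ⟨bb, hbb'⟩ := exists_branch_of_not_mem hu
                have := hK2 bb (Or.inl hbb')
                exact this ▸ hbb'
              obtain ⟨z, hzmem, hzn⟩ := pick_nbr _ hxbr (aN hconn u hu)
              have hzadj : G.Adj (aB hconn u hu) z := hzmem
              have hzK : z ∉ pruneKeep G := fun hk => hzadj.ne' (hK2 z hk)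
              obtain ⟨hbz, hdz, hnz⟩ := pendant _ (aB_mem hconn u hu) z hzadj hzK
              have hoz : ¬ Even (aD hconn z hzK) := by rw [Nat.even_iff, hdz]; omega
              have hcz : c z = cn (J (aB hconn u hu) ⟨z, hzmem⟩) := by
                rw [c_odd z hzK hoz]
                exact congrArg cn (Jcongr _ _ _ _ hbz hnz _ _)
              refine ⟨cn (J (aB hconn u hu) ⟨z, hzmem⟩), ⟨z, hcz⟩,
                fun h => ca_ne_cn _ _ h.symm, ?_⟩
              intro h
              exact hzn (congrArg Subtype.val (hJinj _ (cn_inj h)))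
          have hs1 : distClass G c u i
              = aD hconn u hu + distClass G c (aB hconn u hu) i :=
            H4c u hu i hine hinca hincn
          have hinca' : i ≠ ca (c' ⟨aB hconn v hv, aB_mem hconn v hv⟩) := by
            rw [show (⟨aB hconn v hv, aB_mem hconn v hv⟩ : pruneKeep G)
              = ⟨aB hconn u hu, aB_mem hconn u hu⟩ from Subtype.ext hbb.symm]
            exact hinca
          have hincn' : i ≠ cn (J (aB hconn v hv) ⟨aN hconn v hv, aN_adj hconn v hv⟩) := by
            rw [← hJeq]
            exact hincn
          have hs2 : distClass G c v i
              = aD hconn v hv + distClass G c (aB hconn v hv) i :=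
            H4c v hv i hine hinca' hincn'
          rw [hbb] at hs1
          have := hcode i
          omega
      · exfalso
        by_cases hcbb : c' ⟨aB hconn u hu, aB_mem hconn u hu⟩
            = c' ⟨aB hconn v hv, aB_mem hconn v hv⟩
        case neg =>
          have hne : ∃ x, c x = ca (c' ⟨aB hconn u hu, aB_mem hconn u hu⟩) :=
            ⟨aB hconn u hu, c_kept _ _⟩
          have hvsh : distClass G c v (ca (c' ⟨aB hconn u hu, aB_mem hconn u hu⟩)) =
              aD hconn v hv + distClass G c (aB hconn v hv)
                (ca (c' ⟨aB hconn u hu, aB_mem hconn u hu⟩)) :=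
            H4c v hv _ hne (fun h => hcbb (ca_inj h)) (fun h => ca_ne_cn _ _ h)
          have hbpos : 1 ≤ distClass G c (aB hconn v hv)
              (ca (c' ⟨aB hconn u hu, aB_mem hconn u hu⟩)) :=
            distClass_pos (fun w _ => hconn.preconnected _ w) hne
              (by
                rw [c_kept _ (aB_mem hconn v hv)]
                exact fun h => hcbb (ca_inj h).symm)
          have hdv := aD_pos hconn v hv
          by_cases he : Even (aD hconn u hu)
          · have h0 : distClass G c u (ca (c' ⟨aB hconn u hu, aB_mem hconn u hu⟩)) = 0 := by
              rw [H4a u hu]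
              exact if_pos he
            have := hcode (ca (c' ⟨aB hconn u hu, aB_mem hconn u hu⟩))
            omega
          · have h1 : distClass G c u (ca (c' ⟨aB hconn u hu, aB_mem hconn u hu⟩)) = 1 := by
              rw [H4a u hu]
              exact if_neg he
            have := hcode (ca (c' ⟨aB hconn u hu, aB_mem hconn u hu⟩))
            omega
        case pos =>
          have hside : ∀ (u') (hu' : u' ∉ pruneKeep G) (v') (hv' : v' ∉ pruneKeep G),
              aB hconn u' hu' ≠ aB hconn v' hv' →
              c' ⟨aB hconn u' hu', aB_mem hconn u' hu'⟩
                = c' ⟨aB hconn v' hv', aB_mem hconn v' hv'⟩ →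
              (∀ i, distClass G c u' i = distClass G c v' i) →
              aD hconn v' hv' ≤ aD hconn u' hu' := by
            intro u' hu' v' hv' hbb' hcbb' hcode'
            obtain ⟨z, hz, hadj⟩ := kept_nbr _ (aB_mem hconn u' hu') _ (aB_mem hconn v' hv')
              (fun h => hbb' h.symm)
            have hne : ∃ x, c x = ca (c' ⟨z, hz⟩) := ⟨z, c_kept z hz⟩
            have hc'ne : c' ⟨z, hz⟩ ≠ c' ⟨aB hconn u' hu', aB_mem hconn u' hu'⟩ :=
              fun h => hc'prop _ _
                (show (prune G).Adj ⟨aB hconn u' hu', aB_mem hconn u' hu'⟩ ⟨z, hz⟩ from hadj)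
                h.symm
            have hs1 : distClass G c u' (ca (c' ⟨z, hz⟩))
                = aD hconn u' hu' + distClass G c (aB hconn u' hu') (ca (c' ⟨z, hz⟩)) :=
              H4c u' hu' _ hne (fun h => hc'ne (ca_inj h)) (fun h => ca_ne_cn _ _ h)
            have hb1 : distClass G c (aB hconn u' hu') (ca (c' ⟨z, hz⟩)) = 1 := by
              rw [H3 _ (aB_mem hconn u' hu')]
              exact kept_code_one _ _ z hz hadj
            have hs2 : distClass G c v' (ca (c' ⟨z, hz⟩))
                = aD hconn v' hv' + distClass G c (aB hconn v' hv') (ca (c' ⟨z, hz⟩)) :=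
              H4c v' hv' _ hne (fun h => hc'ne ((ca_inj h).trans hcbb'.symm))
                (fun h => ca_ne_cn _ _ h)
            have hb2 : 1 ≤ distClass G c (aB hconn v' hv') (ca (c' ⟨z, hz⟩)) :=
              distClass_pos (fun w _ => hconn.preconnected _ w) hne
                (by
                  rw [c_kept _ (aB_mem hconn v' hv')]
                  exact fun h => hc'ne ((ca_inj h).symm.trans hcbb'.symm))
            have := hcode' (ca (c' ⟨z, hz⟩))
            omega
          have haD : aD hconn u hu = aD hconn v hv := by
            have h1 := hside u hu v hv hbb hcbb hcode
            have h2 := hside v hv u hu (fun h => hbb h.symm) hcbb.symm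
              (fun i => (hcode i).symm)
            omega
          have hbeq : (⟨aB hconn u hu, aB_mem hconn u hu⟩ : pruneKeep G)
              = ⟨aB hconn v hv, aB_mem hconn v hv⟩ := by
            apply hc'inj
            funext i₀
            show distClass (prune G) c' ⟨aB hconn u hu, aB_mem hconn u hu⟩ i₀
              = distClass (prune G) c' ⟨aB hconn v hv, aB_mem hconn v hv⟩ i₀
            by_cases hne : ∃ w : pruneKeep G, c' w = i₀
            · by_cases hib : i₀ = c' ⟨aB hconn u hu, aB_mem hconn u hu⟩
              · have e1 : distClass (prune G) c' ⟨aB hconn u hu, aB_mem hconn u hu⟩ i₀ = 0 :=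
                  distClass_self _ hib.symm
                have e2 : distClass (prune G) c' ⟨aB hconn v hv, aB_mem hconn v hv⟩ i₀ = 0 :=
                  distClass_self _ (hib ▸ hcbb.symm)
                simp only [e1, e2]
              · obtain ⟨w0, hw0⟩ := hne
                have hGne : ∃ x, c x = ca i₀ :=
                  ⟨w0.1, by rw [c_kept w0.1 w0.2]; exact congrArg ca hw0⟩
                have hs1 : distClass G c u (ca i₀)
                    = aD hconn u hu + distClass G c (aB hconn u hu) (ca i₀) :=
                  H4c u hu _ hGne (fun h => hib (ca_inj h)) (fun h => ca_ne_cn _ _ h)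
                have hs2 : distClass G c v (ca i₀)
                    = aD hconn v hv + distClass G c (aB hconn v hv) (ca i₀) :=
                  H4c v hv _ hGne (fun h => hib ((ca_inj h).trans hcbb.symm))
                    (fun h => ca_ne_cn _ _ h)
                have hcu := hcode (ca i₀)
                rw [hs1, hs2, haD] at hcu
                have hx1 := H3 _ (aB_mem hconn u hu) i₀
                have hx2 := H3 _ (aB_mem hconn v hv) i₀
                rw [hx1, hx2] at hcu
                omega
            · push_neg at hne
              rw [distClass_empty (G := prune G) _ (fun w hw => hne w hw),
                distClass_empty (G := prune G) _ (fun w hw => hne w hw)]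
          exact hbb (congrArg Subtype.val hbeq)
  refine ⟨c, hproper, ?_⟩
  intro u v huv
  have hcode : ∀ i, distClass G c u i = distClass G c v i := fun i => congrFun huv i
  by_cases huK : u ∈ pruneKeep G <;> by_cases hvK : v ∈ pruneKeep G
  · have hbeq : (⟨u, huK⟩ : pruneKeep G) = ⟨v, hvK⟩ := by
      apply hc'inj
      funext i₀
      show distClass (prune G) c' ⟨u, huK⟩ i₀ = distClass (prune G) c' ⟨v, hvK⟩ i₀
      rw [← H3 u huK i₀, ← H3 v hvK i₀]
      exact hcode (ca i₀)
    exact congrArg Subtype.val hbeq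
  · exact (kept_nonkept u huK v hvK hcode).elim
  · exact (kept_nonkept v hvK u huK (fun i => (hcode i).symm)).elim
  · exact nn u huK v hvK hcode
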